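/- arXiv:2206.10102 — 2 statements merged into one kernel-verified Lean document; each statement's English description precedes it below -/
import Mathlib

section
/- Under the hypotheses n ≥ 3, c real with |c| ≤ 1, and c²/4 ≤ |a| ≤ (1-c/2)², if |z| ≤ |a|^{1/n}/2 (and z ≠ 0), then |R(z)| ≥ 2, where R(z) = z^n + a/z^n + c. -/
/-- Under the hypotheses `n ≥ 3`, `c` real with `|c| ≤ 1`, and `c²/4 ≤ |a| ≤ (1-c/2)²`,
if `|z| ≤ |a|^{1/n}/2` (and `z ≠ 0`), then `|R(z)| ≥ 2`, where `R(z) = z^n + a/z^n + c`. -/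
theorem inner_escape (n : ℕ) (hn : 3 ≤ n) (c : ℝ) (hc : |c| ≤ 1)
    (a : ℂ) (ha : a ≠ 0) (ha1 : c ^ 2 / 4 ≤ ‖a‖)
    (ha2 : ‖a‖ ≤ (1 - c / 2) ^ 2) :
    ∀ z : ℂ, z ≠ 0 → ‖z‖ ≤ (‖a‖) ^ ((1 : ℝ) / n) / 2 →
      2 ≤ ‖z ^ n + a / z ^ n + (c : ℂ)‖ := by
  intro z hz hzb
  set A := ‖a‖ with hA
  have hApos : 0 < A := norm_pos_iff.mpr ha
  have hc1 : -1 ≤ c ∧ c ≤ 1 := abs_le.mp hc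
  have hA94 : A ≤ 9 / 4 := by nlinarith [hc1.1, hc1.2]
  have hn0 : (n : ℝ) ≠ 0 := by positivity
  have hroot : (A ^ ((1 : ℝ) / n)) ^ n = A := by
    rw [← Real.rpow_natCast (A ^ ((1 : ℝ) / n)) n, ← Real.rpow_mul hApos.le]
    rw [one_div, inv_mul_cancel₀ hn0, Real.rpow_one]
  have hzabs : (0 : ℝ) < ‖z‖ := norm_pos_iff.mpr hz
  have hzn : ‖z ^ n‖ ≤ A / 2 ^ n := by
    rw [norm_pow]
    calc ‖z‖ ^ n ≤ (A ^ ((1 : ℝ) / n) / 2) ^ n :=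
          pow_le_pow_left₀ hzabs.le hzb n
      _ = A / 2 ^ n := by rw [div_pow, hroot]
  have h2n : (8 : ℝ) ≤ 2 ^ n := by
    calc (8 : ℝ) = 2 ^ 3 := by norm_num
      _ ≤ 2 ^ n := pow_le_pow_right₀ (by norm_num) hn
  have hznpos : 0 < ‖z ^ n‖ := norm_pos_iff.mpr (pow_ne_zero n hz)
  have hdiv : (8 : ℝ) ≤ ‖a / z ^ n‖ := by
    rw [norm_div]
    have h1 : A / (A / 2 ^ n) ≤ A / ‖z ^ n‖ :=
      div_le_div_of_nonneg_left hApos.le hznpos hzn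
    have h2 : A / (A / 2 ^ n) = 2 ^ n := by
      field_simp
    linarith
  have hzn' : ‖z ^ n‖ ≤ 9 / 32 := by
    have h3 : A / 2 ^ n ≤ (9 / 4) / 8 :=
      div_le_div₀ (by norm_num) hA94 (by norm_num) h2n
    linarith
  have htri : ‖a / z ^ n‖ - ‖z ^ n + (c : ℂ)‖
      ≤ ‖z ^ n + a / z ^ n + (c : ℂ)‖ := by
    have := norm_sub_norm_le (a / z ^ n) (-(z ^ n + (c : ℂ)))
    simp only [norm_neg, sub_neg_eq_add] at this
    calc ‖a / z ^ n‖ - ‖z ^ n + (c : ℂ)‖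
        = ‖a / z ^ n‖ - ‖z ^ n + (c : ℂ)‖ := rfl
      _ ≤ ‖a / z ^ n + (z ^ n + (c : ℂ))‖ := this
      _ = ‖z ^ n + a / z ^ n + (c : ℂ)‖ := by rw [show a / z ^ n + (z ^ n + (c : ℂ)) = z ^ n + a / z ^ n + (c : ℂ) by ring]
  have htri2 : ‖z ^ n + (c : ℂ)‖ ≤ ‖z ^ n‖ + |c| := by
    calc ‖z ^ n + (c : ℂ)‖ ≤ ‖z ^ n‖ + ‖(c : ℂ)‖ :=
          norm_add_le _ _
      _ = ‖z ^ n‖ + |c| := by rw [Complex.norm_real, Real.norm_eq_abs]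
  linarith
end

section
/- For z = r·exp(i(ψ ± π)/(2n)) with |a|^{1/n}/2 < r < 2 and ψ = Arg(a), one has R(z) = ±i·e^{iψ/2}·(r^n - |a|/r^n) + c. In particular the image of these two boundary rays lies on the line through c in direction i·e^{iψ/2} (the minor axis of the image ellipse). -/
open Complex

lemma pow_ray (n : ℕ) (hn : 1 ≤ n) (r ψ s : ℝ) :
    ((r : ℂ) * Complex.exp (((ψ + s) / (2 * n) : ℝ) * Complex.I)) ^ n
      = (r : ℂ) ^ n * (Complex.exp ((ψ / 2 : ℝ) * Complex.I) *
          Complex.exp ((s / 2 : ℝ) * Complex.I)) := by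
  have hn0 : (n : ℂ) ≠ 0 := Nat.cast_ne_zero.mpr (by omega)
  have key : (n : ℂ) * (((ψ + s) / (2 * n) : ℝ) * Complex.I)
      = ((ψ / 2 : ℝ) : ℂ) * Complex.I + ((s / 2 : ℝ) : ℂ) * Complex.I := by
    push_cast
    field_simp
  rw [mul_pow, ← Complex.exp_nat_mul, key, Complex.exp_add]

/-- For `z = r·exp(i(ψ ± π)/(2n))` with `|a|^{1/n}/2 < r < 2` and `ψ = Arg(a)`, one has
`R(z) = ±i·e^{iψ/2}·(r^n - |a|/r^n) + c`. -/
theorem image_of_rays (n : ℕ) (hn : 1 ≤ n) (a c : ℂ) (ha : a ≠ 0) (r : ℝ)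
    (hr1 : (‖a‖) ^ ((1 : ℝ) / n) / 2 < r) (hr2 : r < 2) :
    ((r : ℂ) * Complex.exp (((Complex.arg a + Real.pi) / (2 * n) : ℝ) * Complex.I)) ^ n
      + a / ((r : ℂ) * Complex.exp (((Complex.arg a + Real.pi) / (2 * n) : ℝ) * Complex.I)) ^ n + c
    = Complex.I * Complex.exp ((Complex.arg a / 2 : ℝ) * Complex.I) *
        ((r : ℂ) ^ n - (‖a‖ : ℂ) / (r : ℂ) ^ n) + c ∧
    ((r : ℂ) * Complex.exp (((Complex.arg a - Real.pi) / (2 * n) : ℝ) * Complex.I)) ^ n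
      + a / ((r : ℂ) * Complex.exp (((Complex.arg a - Real.pi) / (2 * n) : ℝ) * Complex.I)) ^ n + c
    = -Complex.I * Complex.exp ((Complex.arg a / 2 : ℝ) * Complex.I) *
        ((r : ℂ) ^ n - (‖a‖ : ℂ) / (r : ℂ) ^ n) + c := by
  have habs : (0 : ℝ) < ‖a‖ := by
    simpa [AbsoluteValue.pos_iff] using ha
  have hr0 : (0 : ℝ) < r := lt_trans (by positivity) hr1
  have hrn : ((r : ℂ)) ^ n ≠ 0 := pow_ne_zero _ (by exact_mod_cast hr0.ne')
  set ψ := Complex.arg a with hψ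
  set E := Complex.exp ((ψ / 2 : ℝ) * Complex.I) with hE
  have hE0 : E ≠ 0 := Complex.exp_ne_zero _
  have ha' : a = (‖a‖ : ℂ) * (E * E) := by
    rw [hE, ← Complex.exp_add]
    have : ((ψ / 2 : ℝ) : ℂ) * Complex.I + ((ψ / 2 : ℝ) : ℂ) * Complex.I
        = (ψ : ℂ) * Complex.I := by push_cast; ring
    rw [this, hψ, Complex.norm_mul_exp_arg_mul_I]
  have hpi : Complex.exp ((Real.pi / 2 : ℝ) * Complex.I) = Complex.I := by
    rw [Complex.exp_mul_I]; simp
  have hpi' : Complex.exp ((-Real.pi / 2 : ℝ) * Complex.I) = -Complex.I := by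
    rw [Complex.exp_mul_I]
    push_cast [Real.cos_pi_div_two, Real.sin_pi_div_two, neg_div]
    simp [Complex.cos_neg, Complex.sin_neg, ← Complex.ofReal_cos, ← Complex.ofReal_sin]
  have habsE : ‖E‖ = 1 := by
    rw [hE]; exact Complex.norm_exp_ofReal_mul_I _
  have h1 := pow_ray n hn r ψ Real.pi
  have h2 : ((r : ℂ) * Complex.exp (((ψ - Real.pi) / (2 * n) : ℝ) * Complex.I)) ^ n
      = (r : ℂ) ^ n * (E * -Complex.I) := by
    have := pow_ray n hn r ψ (-Real.pi)
    rw [show ψ + -Real.pi = ψ - Real.pi by ring] at this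
    rw [this, hpi', ← hE]
  rw [hpi, ← hE] at h1
  constructor
  · rw [h1, ha']
    field_simp
    ring_nf
    simp [Complex.I_sq, habsE]
  · rw [h2, ha']
    field_simp
    ring_nf
    simp [Complex.I_sq, habsE, sub_eq_add_neg]
end
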